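/- Let G be a finite group acting faithfully and transitively on a finite set Ω with point stabilizer G_ω, and suppose that every subgroup in L(G_ω,G) is core-complementary. Then the lattice L(G_ω,G) is modular, and G satisfies the Jordan–Hölder theorem for imprimitivity systems: any two maximal chains G_ω = A₀ ⋖ A₁ ⋖ ⋯ ⋖ A_k = G and G_ω = B₀ ⋖ B₁ ⋖ ⋯ ⋖ B_m = G in L(G_ω,G) satisfy k = m, and there is a permutation σ of {1,…,k} such that for each i the permutation group A_i // A_{i-1} is permutation equivalent to B_{σ(i)} // B_{σ(i)-1}. -/

import Mathlib

open Pointwise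

/-- A subgroup `A` with `G_ω ≤ A ≤ G` is core-complementary if
`A = G_ω · core_G(A)` as subsets of `G`. -/
def IsCoreComplementary {G Ω : Type*} [Group G] [MulAction G Ω] (ω : Ω)
    (A : Subgroup G) : Prop :=
  (A : Set G) = (MulAction.stabilizer G ω : Set G) * (A.normalCore : Set G)

/-- For subgroups `H ≤ K` of `G`, the permutation group `K // H`: the image of `K` in the
symmetric group of the coset space of `H` in `K`. -/
def quotPermGroup {G : Type*} [Group G] (H K : Subgroup G) :
    Subgroup (Equiv.Perm (K ⧸ H.subgroupOf K)) :=
  (MulAction.toPermHom K (K ⧸ H.subgroupOf K)).range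

/-- Permutation groups `P ≤ Sym(X)` and `Q ≤ Sym(Y)` are permutation equivalent if there
is a bijection `e : X ≃ Y` such that conjugation by `e` maps `P` onto `Q`. -/
def PermEquiv {X Y : Type*} (P : Subgroup (Equiv.Perm X)) (Q : Subgroup (Equiv.Perm Y)) :
    Prop :=
  ∃ e : X ≃ Y, ∀ p : Equiv.Perm X, p ∈ P ↔ (e.symm.trans (p.trans e) : Equiv.Perm Y) ∈ Q

/-- `c : Fin (k+1) → Subgroup G` is a maximal chain of subgroups
`G_ω = c 0 ⋖ c 1 ⋖ ⋯ ⋖ c k = G` in `L(G_ω, G)`. -/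
def IsMaximalSubgroupChain {G : Type*} [Group G] (S : Subgroup G) (k : ℕ)
    (c : Fin (k + 1) → Subgroup G) : Prop :=
  c 0 = S ∧ c (Fin.last k) = ⊤ ∧ ∀ i : Fin k, c i.castSucc ⋖ c i.succ

/-! ### Auxiliary lemmas -/

namespace CoreComplementaryAux

lemma permEquiv_symm {X Y : Type*} {P : Subgroup (Equiv.Perm X)}
    {Q : Subgroup (Equiv.Perm Y)} (h : PermEquiv P Q) : PermEquiv Q P := by
  obtain ⟨e, h⟩ := h
  refine ⟨e.symm, fun q => ?_⟩
  have key : e.symm.trans ((e.trans (q.trans e.symm)).trans e) = q := by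
    ext x; simp
  have h2 := h (e.trans (q.trans e.symm))
  rw [key] at h2
  rw [Equiv.symm_symm]
  exact h2.symm

lemma permEquiv_trans {X Y Z : Type*} {P : Subgroup (Equiv.Perm X)}
    {Q : Subgroup (Equiv.Perm Y)} {R : Subgroup (Equiv.Perm Z)}
    (h1 : PermEquiv P Q) (h2 : PermEquiv Q R) : PermEquiv P R := by
  obtain ⟨e1, h1⟩ := h1
  obtain ⟨e2, h2⟩ := h2
  refine ⟨e1.trans e2, fun p => ?_⟩
  have key : ((e1.trans e2).symm.trans (p.trans (e1.trans e2)))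
      = e2.symm.trans ((e1.symm.trans (p.trans e1)).trans e2) := by
    ext x; simp
  rw [key]
  exact (h1 p).trans (h2 _)

variable {G : Type*} [Group G] {S : Subgroup G}

lemma mul_eq_left_of_le {Y : Subgroup G} (h : S ≤ Y) :
    (Y : Set G) * (S : Set G) = (Y : Set G) := by
  apply Set.Subset.antisymm
  · rintro z ⟨y, hy, s, hs, rfl⟩
    exact Y.mul_mem hy (h hs)
  · intro z hz
    exact ⟨z, hz, 1, S.one_mem, (mul_one z)⟩

variable (hS : ∀ A : Subgroup G, S ≤ A → (A : Set G) = (S : Set G) * (A.normalCore : Set G))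

include hS

lemma le_sup_cores {X Y : Subgroup G} (hX : S ≤ X) :
    X ≤ S ⊔ (X.normalCore ⊔ Y.normalCore) := by
  intro x hx
  have : x ∈ (S : Set G) * (X.normalCore : Set G) := (hS X hX) ▸ hx
  obtain ⟨s, hs, n, hn, rfl⟩ := this
  exact Subgroup.mul_mem _ (Subgroup.mem_sup_left hs)
    (Subgroup.mem_sup_right (Subgroup.mem_sup_left hn))

/-- The set of the join is the product of the sets. -/
lemma sup_coe_eq_mul {X Y : Subgroup G} (hX : S ≤ X) (hY : S ≤ Y) :
    ((X ⊔ Y : Subgroup G) : Set G) = (X : Set G) * (Y : Set G) := by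
  have hsup : X ⊔ Y = S ⊔ (X.normalCore ⊔ Y.normalCore) := by
    apply le_antisymm
    · refine sup_le (le_sup_cores hS hX) ?_
      have := le_sup_cores (Y := X) hS hY
      rwa [sup_comm Y.normalCore X.normalCore] at this
    · refine sup_le (hX.trans le_sup_left) (sup_le ?_ ?_)
      · exact (X.normalCore_le).trans le_sup_left
      · exact (Y.normalCore_le).trans le_sup_right
  rw [hsup]
  apply Set.Subset.antisymm
  · intro g hg
    rw [Subgroup.mul_normal, Subgroup.normal_mul] at hg
    obtain ⟨s, hs, _, ⟨n1, hn1, n2, hn2, rfl⟩, rfl⟩ := hg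
    refine ⟨s * n1, ?_, n2, Y.normalCore_le hn2, mul_assoc s n1 n2⟩
    have : s * n1 ∈ (S : Set G) * (X.normalCore : Set G) := ⟨s, hs, n1, hn1, rfl⟩
    rwa [← hS X hX] at this
  · rintro g ⟨x, hx, y, hy, rfl⟩
    exact Subgroup.mul_mem _ (le_sup_cores hS hX hx) (by
      have := le_sup_cores (Y := X) hS hY
      rw [sup_comm Y.normalCore X.normalCore] at this
      exact this hy)

/-- Modular law on the interval above `S`. -/
lemma modular_law {X Y Z : Subgroup G} (hX : S ≤ X) (hY : S ≤ Y)
    (hXZ : X ≤ Z) : X ⊔ (Y ⊓ Z) = (X ⊔ Y) ⊓ Z := by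
  apply le_antisymm
  · exact sup_le (le_inf le_sup_left hXZ) (le_inf (inf_le_left.trans le_sup_right) inf_le_right)
  · intro g hg
    obtain ⟨hg1, hg2⟩ := hg
    have : g ∈ (X : Set G) * (Y : Set G) := (sup_coe_eq_mul hS hX hY) ▸ hg1
    obtain ⟨x, hx, y, hy, rfl⟩ := this
    have hyZ : y ∈ Z := by
      have : x⁻¹ * (x * y) ∈ Z := Z.mul_mem (Z.inv_mem (hXZ hx)) hg2
      simpa using this
    have : x * y ∈ (X : Set G) * ((Y ⊓ Z : Subgroup G) : Set G) :=
      ⟨x, hx, y, ⟨hy, hyZ⟩, rfl⟩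
    rw [← sup_coe_eq_mul hS hX (le_inf hY (hX.trans hXZ))] at this
    exact this

lemma covby_sup_of_inf_covby {X Y : Subgroup G} (hX : S ≤ X) (hY : S ≤ Y)
    (h : X ⊓ Y ⋖ Y) : X ⋖ X ⊔ Y := by
  constructor
  · rcases lt_or_eq_of_le (le_sup_left : X ≤ X ⊔ Y) with hlt | heq
    · exact hlt
    · exfalso
      have hYX : Y ≤ X := by rw [heq]; exact le_sup_right
      exact h.lt.ne (inf_eq_right.mpr hYX)
  · intro D hXD hDB
    have hD : X ⊔ (Y ⊓ D) = D := by
      rw [modular_law hS hX hY hXD.le, inf_eq_right.mpr hDB.le]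
    have h1 : X ⊓ Y < Y ⊓ D := by
      rcases lt_or_eq_of_le (le_inf (inf_le_right : X ⊓ Y ≤ Y)
        ((inf_le_left : X ⊓ Y ≤ X).trans hXD.le)) with hlt | heq
      · exact hlt
      · exfalso
        apply hXD.ne
        rw [← hD, ← heq, sup_inf_self]
    have h2 : Y ⊓ D < Y := by
      rcases lt_or_eq_of_le (inf_le_left : Y ⊓ D ≤ Y) with hlt | heq
      · exact hlt
      · exfalso
        apply hDB.ne
        have hYD : Y ≤ D := by rw [← heq]; exact inf_le_right
        exact le_antisymm hDB.le (sup_le hXD.le hYD)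
    exact h.2 h1 h2

lemma inf_covby_of_covby_sup {X Y : Subgroup G} (hX : S ≤ X) (hY : S ≤ Y)
    (h : X ⋖ X ⊔ Y) : X ⊓ Y ⋖ Y := by
  constructor
  · rcases lt_or_eq_of_le (inf_le_right : X ⊓ Y ≤ Y) with hlt | heq
    · exact hlt
    · exfalso
      have hYX : Y ≤ X := by rw [← heq]; exact inf_le_left
      exact h.lt.ne (sup_eq_left.mpr hYX).symm
  · intro C hC hCY
    have hmod : C ⊔ (X ⊓ Y) = (C ⊔ X) ⊓ Y :=
      modular_law hS (le_trans (le_inf hX hY) hC.le) hX hCY.le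
    have hCeq : (C ⊔ X) ⊓ Y = C := by
      rw [← hmod, sup_eq_left.mpr hC.le]
    have h1 : X < C ⊔ X := by
      rcases lt_or_eq_of_le (le_sup_right : X ≤ C ⊔ X) with hlt | heq
      · exact hlt
      · exfalso
        apply hC.ne
        apply le_antisymm hC.le
        have : C ≤ X := by rw [heq]; exact le_sup_left
        exact le_inf this hCY.le
    have h2 : ¬ (X ⊔ C < X ⊔ Y) := h.2 (sup_comm C X ▸ h1)
    have : C ⊔ X = X ⊔ Y := by
      rcases lt_or_eq_of_le (sup_le (hCY.le.trans le_sup_right) le_sup_left : C ⊔ X ≤ X ⊔ Y)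
        with hlt | heq
      · rw [sup_comm C X] at hlt; exact absurd hlt h2
      · exact heq
    apply hCY.ne
    rw [← hCeq, this, inf_eq_right.mpr (le_sup_right : Y ≤ X ⊔ Y)]

/-- The second isomorphism for imprimitivity systems: the action of `X ⊔ Y` on the
cosets of `X` is permutation equivalent to the action of `Y` on the cosets of `X ⊓ Y`. -/
lemma second_iso_permEquiv {X Y : Subgroup G} (hX : S ≤ X) (hY : S ≤ Y) :
    PermEquiv (quotPermGroup X (X ⊔ Y)) (quotPermGroup (X ⊓ Y) Y) := by
  classical
  have hYB : Y ≤ X ⊔ Y := le_sup_right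
  have hB : ((X ⊔ Y : Subgroup G) : Set G) = (Y : Set G) * (X.normalCore : Set G) := by
    rw [sup_comm X Y, sup_coe_eq_mul hS hY hX, hS X hX, ← mul_assoc, mul_eq_left_of_le hY]
  set ι : ↥Y →* ↥(X ⊔ Y) := Subgroup.inclusion hYB with hι
  have hιcoe : ∀ y : ↥Y, ((ι y : ↥(X ⊔ Y)) : G) = (y : G) := fun y => rfl
  let φ : (Y ⧸ (X ⊓ Y).subgroupOf Y) → ((X ⊔ Y : Subgroup G) ⧸ X.subgroupOf (X ⊔ Y)) :=
    Quotient.map' (fun y => ι y) (by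
      intro a b hab
      rw [QuotientGroup.leftRel_apply] at hab ⊢
      rw [Subgroup.mem_subgroupOf] at hab ⊢
      have : ((a : G))⁻¹ * (b : G) ∈ X ⊓ Y := by simpa using hab
      simpa [hιcoe] using this.1)
  have hφmk : ∀ z : ↥Y, φ (QuotientGroup.mk z) = QuotientGroup.mk (ι z) := fun z => rfl
  have hφinj : Function.Injective φ := by
    intro q1 q2 hq
    induction q1 using Quotient.inductionOn' with
    | h a =>
    induction q2 using Quotient.inductionOn' with
    | h b =>
    apply Quotient.sound'
    have hex := Quotient.exact' hq
    rw [QuotientGroup.leftRel_apply, Subgroup.mem_subgroupOf] at hex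
    rw [QuotientGroup.leftRel_apply, Subgroup.mem_subgroupOf]
    refine ⟨?_, (a⁻¹ * b).2⟩
    simpa [hιcoe] using hex
  have hφsurj : Function.Surjective φ := by
    intro q
    induction q using Quotient.inductionOn' with
    | h b =>
    have hbB : (b : G) ∈ (Y : Set G) * (X.normalCore : Set G) := hB ▸ b.2
    obtain ⟨y, hy, n, hn, hbeq⟩ := hbB
    refine ⟨QuotientGroup.mk ⟨y, hy⟩, ?_⟩
    rw [hφmk]
    apply Quotient.sound'
    rw [QuotientGroup.leftRel_apply, Subgroup.mem_subgroupOf]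
    have hyn : ((ι ⟨y, hy⟩)⁻¹ * b : ↥(X ⊔ Y)) = (⟨y, hYB hy⟩⁻¹ * b : ↥(X ⊔ Y)) := rfl
    have : (((ι ⟨y, hy⟩)⁻¹ * b : ↥(X ⊔ Y)) : G) = n := by
      rw [hyn]
      push_cast
      rw [← hbeq]
      group
    rw [this]
    exact X.normalCore_le hn
  have hφsmul : ∀ (y : ↥Y) (q : Y ⧸ (X ⊓ Y).subgroupOf Y),
      φ (y • q) = (ι y) • φ q := by
    intro y q
    induction q using Quotient.inductionOn' with
    | h z =>
    show φ (y • QuotientGroup.mk z) = (ι y) • φ (QuotientGroup.mk z)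
    rw [MulAction.Quotient.smul_mk, hφmk, hφmk, MulAction.Quotient.smul_mk,
      smul_eq_mul, smul_eq_mul, map_mul]
  let e : ((X ⊔ Y : Subgroup G) ⧸ X.subgroupOf (X ⊔ Y)) ≃ (Y ⧸ (X ⊓ Y).subgroupOf Y) :=
    (Equiv.ofBijective φ ⟨hφinj, hφsurj⟩).symm
  have heφ : ∀ q, e (φ q) = q := fun q =>
    (Equiv.ofBijective φ ⟨hφinj, hφsurj⟩).symm_apply_apply q
  have heφ' : ∀ q, e.symm q = φ q := fun q => rfl
  refine ⟨e, ?_⟩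
  intro p
  constructor
  · rintro ⟨b, hb⟩
    obtain ⟨y, hy, n, hn, hbeq⟩ : (b : G) ∈ (Y : Set G) * (X.normalCore : Set G) := hB ▸ b.2
    have hact : ∀ r : (X ⊔ Y : Subgroup G) ⧸ X.subgroupOf (X ⊔ Y),
        b • r = (ι ⟨y, hy⟩) • r := by
      intro r
      induction r using Quotient.inductionOn' with
      | h c =>
      show b • QuotientGroup.mk c = (ι ⟨y, hy⟩) • QuotientGroup.mk c
      rw [MulAction.Quotient.smul_mk, MulAction.Quotient.smul_mk]
      apply Quotient.sound'
      rw [QuotientGroup.leftRel_apply, Subgroup.mem_subgroupOf]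
      have hcoe : (((b • c)⁻¹ * (ι ⟨y, hy⟩ • c) : ↥(X ⊔ Y)) : G)
          = (c : G)⁻¹ * n⁻¹ * (c : G) := by
        simp only [smul_eq_mul]
        push_cast [hιcoe]
        rw [← hbeq]
        group
      rw [hcoe]
      have hmem := (X.normalCore_normal).conj_mem n⁻¹ (X.normalCore.inv_mem hn) (c : G)⁻¹
      apply X.normalCore_le
      simpa using hmem
    refine ⟨⟨y, hy⟩, ?_⟩
    ext q
    show (⟨y, hy⟩ : ↥Y) • q = e (p (e.symm q))
    rw [heφ' q, ← hb]
    show (⟨y, hy⟩ : ↥Y) • q = e (b • φ q)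
    rw [hact (φ q), ← hφsmul ⟨y, hy⟩ q, heφ]
  · rintro ⟨y, hy⟩
    refine ⟨ι y, ?_⟩
    ext r
    obtain ⟨q, rfl⟩ := hφsurj r
    show (ι y) • φ q = p (φ q)
    have h1 : y • q = e (p (e.symm q)) := Equiv.ext_iff.mp hy q
    rw [heφ' q] at h1
    have h2 : φ (y • q) = p (φ q) := by
      have h3 := congrArg e.symm h1
      rw [Equiv.symm_apply_apply] at h3
      rw [heφ'] at h3
      exact h3
    rw [← hφsmul y q, h2]

/-- The Jordan–Hölder lattice structure on the interval `[S, G]`. -/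
def jhl : JordanHolderLattice (Set.Ici S) where
  IsMaximal a b := (a : Subgroup G) ⋖ (b : Subgroup G)
  lt_of_isMaximal {x y} h := Subtype.mk_lt_mk.mpr h.lt
  sup_eq_of_isMaximal {x y z} hx hy hne := by
    apply Subtype.ext
    show ((x : Subgroup G) ⊔ (y : Subgroup G)) = (z : Subgroup G)
    have hne' : (x : Subgroup G) ≠ (y : Subgroup G) := fun h => hne (Subtype.ext h)
    rcases lt_or_eq_of_le (sup_le hx.le hy.le :
        (x : Subgroup G) ⊔ (y : Subgroup G) ≤ (z : Subgroup G)) with hlt | heq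
    · rcases lt_or_eq_of_le (le_sup_left :
          (x : Subgroup G) ≤ (x : Subgroup G) ⊔ (y : Subgroup G)) with h1 | h1
      · exact absurd hlt (hx.2 h1)
      · exfalso
        have hyx : (y : Subgroup G) ≤ (x : Subgroup G) := by
          rw [h1]; exact le_sup_right
        have hylt : (y : Subgroup G) < (x : Subgroup G) :=
          lt_of_le_of_ne hyx (fun h => hne' h.symm)
        exact (hy.2 hylt) hx.lt
    · exact heq
  isMaximal_inf_left_of_isMaximal_sup {x y} hx hy := by
    have hy' : (y : Subgroup G) ⋖ (y : Subgroup G) ⊔ (x : Subgroup G) := by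
      have h0 : (y : Subgroup G) ⋖ (x : Subgroup G) ⊔ (y : Subgroup G) := hy
      rwa [sup_comm] at h0
    have := inf_covby_of_covby_sup hS y.2 x.2 hy'
    have hgoal : ((x ⊓ y : Set.Ici S) : Subgroup G) = (x : Subgroup G) ⊓ (y : Subgroup G) := rfl
    show ((x ⊓ y : Set.Ici S) : Subgroup G) ⋖ (x : Subgroup G)
    rw [hgoal, inf_comm]
    exact this

end CoreComplementaryAux

open CoreComplementaryAux in
theorem jordan_holder_of_core_complementary {G Ω : Type*} [Group G] [Fintype Ω]
    [MulAction G Ω] [FaithfulSMul G Ω] (htrans : MulAction.IsPretransitive G Ω)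
    (ω : Ω)
    (hcc : ∀ A : Subgroup G, MulAction.stabilizer G ω ≤ A → IsCoreComplementary ω A) :
    (∀ X Y : Subgroup G, MulAction.stabilizer G ω ≤ X → MulAction.stabilizer G ω ≤ Y →
      ((X ⊓ Y ⋖ X ∧ X ⊓ Y ⋖ Y) ↔ (X ⋖ X ⊔ Y ∧ Y ⋖ X ⊔ Y))) ∧
    (∀ (k m : ℕ) (c : Fin (k + 1) → Subgroup G) (d : Fin (m + 1) → Subgroup G),
      IsMaximalSubgroupChain (MulAction.stabilizer G ω) k c →
      IsMaximalSubgroupChain (MulAction.stabilizer G ω) m d →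
      ∃ hkm : k = m, ∃ σ : Equiv.Perm (Fin k), ∀ i : Fin k,
        PermEquiv (quotPermGroup (c i.castSucc) (c i.succ))
          (quotPermGroup (d (Fin.cast hkm (σ i)).castSucc)
            (d (Fin.cast hkm (σ i)).succ))) := by
  set S := MulAction.stabilizer G ω with hSdef
  have hS : ∀ A : Subgroup G, S ≤ A → (A : Set G) = (S : Set G) * (A.normalCore : Set G) :=
    fun A hA => hcc A hA
  constructor
  · intro X Y hX hY
    constructor
    · rintro ⟨h1, h2⟩
      refine ⟨covby_sup_of_inf_covby hS hX hY h2, ?_⟩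
      have := covby_sup_of_inf_covby hS hY hX (inf_comm X Y ▸ h1)
      rwa [sup_comm Y X] at this
    · rintro ⟨g1, g2⟩
      refine ⟨?_, inf_covby_of_covby_sup hS hX hY g1⟩
      have := inf_covby_of_covby_sup hS hY hX (sup_comm X Y ▸ g2)
      rwa [inf_comm Y X] at this
  · intro k m c d hc hd
    letI inst : JordanHolderLattice (Set.Ici S) := jhl hS
    obtain ⟨hc0, hclast, hcstep⟩ := hc
    obtain ⟨hd0, hdlast, hdstep⟩ := hd
    have hcmono : StrictMono c := Fin.strictMono_iff_lt_succ.2 (fun i => (hcstep i).lt)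
    have hdmono : StrictMono d := Fin.strictMono_iff_lt_succ.2 (fun i => (hdstep i).lt)
    have hcle : ∀ i, S ≤ c i := fun i => by
      rw [← hc0]; exact hcmono.monotone (Fin.zero_le i)
    have hdle : ∀ i, S ≤ d i := fun i => by
      rw [← hd0]; exact hdmono.monotone (Fin.zero_le i)
    let s₁ : CompositionSeries (Set.Ici S) :=
      ⟨k, fun i => ⟨c i, hcle i⟩, fun i => hcstep i⟩
    let s₂ : CompositionSeries (Set.Ici S) :=
      ⟨m, fun i => ⟨d i, hdle i⟩, fun i => hdstep i⟩
    have hb : s₁.head = s₂.head := Subtype.ext (hc0.trans hd0.symm)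
    have ht : s₁.last = s₂.last := Subtype.ext (hclast.trans hdlast.symm)
    obtain ⟨f, hf⟩ := CompositionSeries.jordan_holder s₁ s₂ hb ht
    have hkm : k = m := Fin.equiv_iff_eq.mp ⟨f⟩
    refine ⟨hkm, (f.trans (finCongr hkm.symm) : Equiv.Perm (Fin k)), fun i => ?_⟩
    have hfi : Fin.cast hkm ((f.trans (finCongr hkm.symm)) i) = f i := by
      ext; simp
    rw [hfi]
    exact JordanHolderLattice.Iso.rel
      (fun (p q : Set.Ici S × Set.Ici S) =>
        PermEquiv (quotPermGroup (p.1 : Subgroup G) (p.2 : Subgroup G))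
          (quotPermGroup (q.1 : Subgroup G) (q.2 : Subgroup G)))
      (fun {_} => ⟨Equiv.refl _, fun p => by simp⟩)
      (fun h => permEquiv_symm h) (fun h1 h2 => permEquiv_trans h1 h2)
      (fun {x y} _ => second_iso_permEquiv hS x.2 y.2) (hf i)
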